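/- With the notation of the previous setup (S_{a,g,z} built from row-selection matrices R_{a,g}, and Q_z as defined), for any a, z ∈ [h], and any rℓ̃ × ℓ̃ matrix M over F_q, one has (S_{a,0,z} ⊗ I_r)·(I_{s+h-1} ⊗ M)·Q_z = 0. -/

import Mathlib

open Matrix

/-- `S_{a,0,z} ⊗ I_r`, where `S_{a,g,z}` is the `s × (s+h-1)` block matrix built from the
row-selection matrices `R_{a,·}` (abstracted as `R g : Matrix ι J F`): its `(i,j)` block
is `R (g ⊕_s i)` when `j = i` or `j = z + s`, and `0` otherwise. -/
def SkronIr {F : Type*} [Field F] {ι J : Type*} {s h r : ℕ}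
    (R : Fin s → Matrix ι J F) (z : Fin h) (g : Fin s) :
    Matrix ((Fin s × ι) × Fin r) (Fin (s + h - 1) × J × Fin r) F :=
  Matrix.of fun x y =>
    (if (y.1 : ℕ) = (x.1.1 : ℕ) ∨ (y.1 : ℕ) = (z : ℕ) + s
      then R (g + x.1.1) x.1.2 y.2.1 else 0) *
    (if x.2 = y.2.2 then 1 else 0)

/-- `I_{s+h-1} ⊗ M` for an `rℓ̃ × ℓ̃` matrix `M`. -/
def IkronM {F : Type*} [Field F] {J : Type*} [DecidableEq J] {s h r : ℕ}
    (M : Matrix (J × Fin r) J F) :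
    Matrix (Fin (s + h - 1) × J × Fin r) (Fin (s + h - 1) × J) F :=
  Matrix.of fun x y => if x.1 = y.1 then M x.2 y.2 else 0

/-- The matrix `Q_z`: `I` at diagonal blocks `i = j ≥ s`, `-I` at blocks `(i, z+s)`
for `i ∈ [s]`, and `0` elsewhere. -/
def Qmat {F : Type*} [Field F] {J : Type*} [DecidableEq J] (s h : ℕ) (z : Fin h) :
    Matrix (Fin (s + h - 1) × J) (Fin (s + h - 1) × J) F :=
  Matrix.of fun x y =>
    if x.1 = y.1 ∧ s ≤ (x.1 : ℕ) then (if x.2 = y.2 then 1 else 0)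
    else if (x.1 : ℕ) < s ∧ (y.1 : ℕ) = (z : ℕ) + s then (if x.2 = y.2 then -1 else 0)
    else 0

/-- `(S_{a,0,z} ⊗ I_r)·(I_{s+h-1} ⊗ M)·Q_z = 0`. -/
theorem stmt13 {F : Type*} [Field F] {ι J : Type*}
    [Fintype ι] [Fintype J] [DecidableEq ι] [DecidableEq J]
    (s h r : ℕ) [NeZero s] (hs : 2 ≤ s) (hh : 1 ≤ h)
    (R : Fin s → Matrix ι J F)
    (hR : ∑ g : Fin s, (R g)ᵀ * R g = 1)
    (z : Fin h) (M : Matrix (J × Fin r) J F) :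
    (SkronIr R z 0 * IkronM (s := s) (h := h) M :
      Matrix ((Fin s × ι) × Fin r) (Fin (s + h - 1) × J) F) * Qmat (F := F) (J := J) s h z =
      (0 : Matrix ((Fin s × ι) × Fin r) (Fin (s + h - 1) × J) F) := by
  change (Matrix.of fun a b => ∑ k, SkronIr R z 0 a k * IkronM (s := s) (h := h) M k b :
      Matrix ((Fin s × ι) × Fin r) (Fin (s + h - 1) × J) F) * Qmat (F := F) (J := J) s h z = 0
  ext ⟨⟨i, x⟩, t⟩ ⟨j, y⟩
  simp only [Matrix.mul_apply, SkronIr, IkronM, Qmat, Matrix.of_apply, Matrix.zero_apply,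
    Fintype.sum_prod_type, zero_add, mul_ite, ite_mul, mul_zero, zero_mul, mul_one, mul_neg,
    Finset.sum_ite_irrel, Finset.sum_const_zero, Finset.sum_ite_eq, Finset.sum_ite_eq',
    Finset.mem_univ, if_true]
  set c := ∑ x_2 : J, R i x x_2 * M (x_2, t) y with hc
  have hi2 := i.isLt
  by_cases hj : (j:ℕ) = (z:ℕ) + s
  · have hi' : (i:ℕ) < s + h - 1 := by omega
    have hsum : ∀ x1 : Fin (s+h-1),
        (if x1 = j ∧ s ≤ (x1:ℕ) then
           if (x1:ℕ) = (i:ℕ) ∨ (x1:ℕ) = (z:ℕ) + s then c else 0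
         else if (x1:ℕ) < s ∧ (j:ℕ) = (z:ℕ) + s then
           -if (x1:ℕ) = (i:ℕ) ∨ (x1:ℕ) = (z:ℕ) + s then c else 0 else 0)
        = (if x1 = j then c else 0) + (if x1 = (⟨(i:ℕ), hi'⟩ : Fin (s+h-1)) then -c else 0) := by
      intro x1
      simp only [Fin.ext_iff, Fin.val_mk]
      by_cases e1 : (x1:ℕ) = (j:ℕ)
      · rw [if_pos ⟨e1, by omega⟩, if_pos (Or.inr (by omega)), if_pos e1, if_neg (by omega)]
        ring
      · rw [if_neg (fun hcon => e1 hcon.1), if_neg e1]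
        by_cases e2 : (x1:ℕ) = (i:ℕ)
        · rw [if_pos ⟨by omega, hj⟩, if_pos (Or.inl e2), if_pos e2]
          ring
        · rw [if_neg e2]
          split_ifs with h3 h4
          · exfalso; omega
          · ring
          · ring
    rw [Finset.sum_congr rfl (fun x1 _ => hsum x1), Finset.sum_add_distrib,
      Finset.sum_ite_eq' Finset.univ, Finset.sum_ite_eq' Finset.univ]
    simp
  · apply Finset.sum_eq_zero
    intro x1 _
    simp only [Fin.ext_iff]
    split_ifs with h1 h2 h3 h4 <;> first | rfl | (exfalso; omega) | simp
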